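/- Given a commutative square of categories and functors u v̄ = v ū with adjunctions f ⊣ u, f̄ ⊣ ū, v ⊣ g, v̄ ⊣ ḡ, a section π̌ of the mate π : fv ⟶ v̄ f̄ (so π π̌ = 1), and defining λ : u f v g ⟶ v g u f as the composite (v σ f) ∘ (v ū θ) ∘ (identification u v̄ = v ū applied to f̄ g) ∘ (u π g), where θ : f̄ g ⟶ ḡ f is the mate of π̌ under v ⊣ g and v̄ ⊣ ḡ, and σ : ū ḡ ⟶ g u is the mate of the identity: then λ satisfies the multiplication compatibility axiom of a weak mixed distributive law for the monad t = u f and comonad c = v g, namely λ ∘ (μ ▷ c) = (c ◁ μ) ∘ (λ ▷ t) ∘ (t ◁ λ), where μ = u ε f is the monad multiplication. -/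

import Mathlib

open CategoryTheory
universe v₁ v₂ v₃ v₄ u₁ u₂ u₃ u₄

theorem aux_chase
    {P : Type u₁} {L : Type u₂} {M : Type u₃} {K : Type u₄}
    [Category.{v₁} P] [Category.{v₂} L] [Category.{v₃} M] [Category.{v₄} K]
    (vbar : P ⥤ L) (ubar : P ⥤ M) (u : L ⥤ K) (v : M ⥤ K)
    (e : vbar ⋙ u ≅ ubar ⋙ v)
    (f : K ⥤ L) (adjf : f ⊣ u)
    (fbar : M ⥤ P) (adjfbar : fbar ⊣ ubar)
    (g : K ⥤ M) (adjv : v ⊣ g)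
    (gbar : L ⥤ P) (adjvbar : vbar ⊣ gbar)
    (π : (v ⋙ f) ⟶ (fbar ⋙ vbar))
    (σ : (gbar ⋙ ubar) ⟶ (u ⋙ g))
    (θ : (g ⋙ fbar) ⟶ (f ⋙ gbar))
    (hπdef : ∀ m : M, π.app m = f.map (v.map (adjfbar.unit.app m)) ≫
      f.map (e.inv.app (fbar.obj m)) ≫ adjf.counit.app (vbar.obj (fbar.obj m)))
    (key : ∀ A : L, σ.app A ≫ adjfbar.unit.app (g.obj (u.obj A)) ≫
      ubar.map (θ.app (u.obj A)) ≫ ubar.map (gbar.map (adjf.counit.app A)) =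
      𝟙 (ubar.obj (gbar.obj A)))
    (X : K) :
    u.map (adjf.counit.app (f.obj (v.obj (g.obj X)))) ≫
      (u.map (π.app (g.obj X)) ≫ e.hom.app (fbar.obj (g.obj X)) ≫
        v.map (ubar.map (θ.app X)) ≫ v.map (σ.app (f.obj X))) =
    u.map (f.map (u.map (π.app (g.obj X)) ≫ e.hom.app (fbar.obj (g.obj X)) ≫
        v.map (ubar.map (θ.app X)) ≫ v.map (σ.app (f.obj X)))) ≫
      (u.map (π.app (g.obj (u.obj (f.obj X)))) ≫
        e.hom.app (fbar.obj (g.obj (u.obj (f.obj X)))) ≫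
        v.map (ubar.map (θ.app (u.obj (f.obj X)))) ≫
        v.map (σ.app (f.obj (u.obj (f.obj X))))) ≫
      v.map (g.map (u.map (adjf.counit.app (f.obj X)))) := by
  -- step ♦ : conjugation of key by e
  have diamond : ∀ A : L,
      e.hom.app (gbar.obj A) ≫ v.map (σ.app A) ≫
        v.map (adjfbar.unit.app (g.obj (u.obj A))) ≫
        e.inv.app (fbar.obj (g.obj (u.obj A))) ≫
        u.map (vbar.map (θ.app (u.obj A))) ≫
        u.map (vbar.map (gbar.map (adjf.counit.app A))) =
      𝟙 (u.obj (vbar.obj (gbar.obj A))) := by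
    intro A
    have n1 : v.map (ubar.map (θ.app (u.obj A))) ≫
        e.inv.app (gbar.obj (f.obj (u.obj A))) =
        e.inv.app (fbar.obj (g.obj (u.obj A))) ≫ u.map (vbar.map (θ.app (u.obj A))) := by
      simpa using e.inv.naturality (θ.app (u.obj A))
    have n2 : v.map (ubar.map (gbar.map (adjf.counit.app A))) ≫ e.inv.app (gbar.obj A) =
        e.inv.app (gbar.obj (f.obj (u.obj A))) ≫
          u.map (vbar.map (gbar.map (adjf.counit.app A))) := by
      simpa using e.inv.naturality (gbar.map (adjf.counit.app A))
    slice_lhs 4 5 => rw [← n1]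
    slice_lhs 5 6 => rw [← n2]
    slice_lhs 2 5 => rw [← Functor.map_comp, ← Functor.map_comp, ← Functor.map_comp, key A]
    simp
  -- step ‡ : transposition of ♦ along f ⊣ u
  have ddagger : ∀ A : L,
      adjf.counit.app (vbar.obj (gbar.obj A)) =
      f.map (e.hom.app (gbar.obj A)) ≫ f.map (v.map (σ.app A)) ≫
        π.app (g.obj (u.obj A)) ≫ vbar.map (θ.app (u.obj A)) ≫
        vbar.map (gbar.map (adjf.counit.app A)) := by
    intro A
    rw [hπdef]
    have n1 : adjf.counit.app (vbar.obj (fbar.obj (g.obj (u.obj A)))) ≫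
        vbar.map (θ.app (u.obj A)) =
        f.map (u.map (vbar.map (θ.app (u.obj A)))) ≫
          adjf.counit.app (vbar.obj (gbar.obj (f.obj (u.obj A)))) := by
      simpa using (adjf.counit.naturality (vbar.map (θ.app (u.obj A)))).symm
    have n2 : adjf.counit.app (vbar.obj (gbar.obj (f.obj (u.obj A)))) ≫
        vbar.map (gbar.map (adjf.counit.app A)) =
        f.map (u.map (vbar.map (gbar.map (adjf.counit.app A)))) ≫
          adjf.counit.app (vbar.obj (gbar.obj A)) := by
      simpa using (adjf.counit.naturality (vbar.map (gbar.map (adjf.counit.app A)))).symm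
    slice_rhs 5 6 => rw [n1]
    slice_rhs 6 7 => rw [n2]
    slice_rhs 1 6 => rw [← Functor.map_comp, ← Functor.map_comp, ← Functor.map_comp,
      ← Functor.map_comp, ← Functor.map_comp, diamond A]
    simp
  -- main assembly
  have l1 : adjf.counit.app (f.obj (v.obj (g.obj X))) ≫ π.app (g.obj X) =
      f.map (u.map (π.app (g.obj X))) ≫
        adjf.counit.app (vbar.obj (fbar.obj (g.obj X))) := by
    simpa using (adjf.counit.naturality (π.app (g.obj X))).symm
  have l3 : adjf.counit.app (vbar.obj (fbar.obj (g.obj X))) ≫ vbar.map (θ.app X) =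
      f.map (u.map (vbar.map (θ.app X))) ≫
        adjf.counit.app (vbar.obj (gbar.obj (f.obj X))) := by
    simpa using (adjf.counit.naturality (vbar.map (θ.app X))).symm
  have eθ : ∀ Y : K, e.hom.app (fbar.obj (g.obj Y)) ≫ v.map (ubar.map (θ.app Y)) =
      u.map (vbar.map (θ.app Y)) ≫ e.hom.app (gbar.obj (f.obj Y)) := by
    intro Y; simpa using (e.hom.naturality (θ.app Y)).symm
  have eε : e.hom.app (gbar.obj (f.obj (u.obj (f.obj X)))) ≫
      v.map (ubar.map (gbar.map (adjf.counit.app (f.obj X)))) =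
      u.map (vbar.map (gbar.map (adjf.counit.app (f.obj X)))) ≫
        e.hom.app (gbar.obj (f.obj X)) := by
    simpa using (e.hom.naturality (gbar.map (adjf.counit.app (f.obj X)))).symm
  have sn : σ.app (f.obj (u.obj (f.obj X))) ≫ g.map (u.map (adjf.counit.app (f.obj X))) =
      ubar.map (gbar.map (adjf.counit.app (f.obj X))) ≫ σ.app (f.obj X) := by
    simpa using (σ.naturality (adjf.counit.app (f.obj X))).symm
  -- LHS
  calc
    u.map (adjf.counit.app (f.obj (v.obj (g.obj X)))) ≫
      (u.map (π.app (g.obj X)) ≫ e.hom.app (fbar.obj (g.obj X)) ≫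
        v.map (ubar.map (θ.app X)) ≫ v.map (σ.app (f.obj X)))
      = u.map (f.map (u.map (π.app (g.obj X)))) ≫
          u.map (adjf.counit.app (vbar.obj (fbar.obj (g.obj X)))) ≫
          e.hom.app (fbar.obj (g.obj X)) ≫
          v.map (ubar.map (θ.app X)) ≫ v.map (σ.app (f.obj X)) := by
        slice_lhs 1 2 => rw [← Functor.map_comp, l1, Functor.map_comp]
        simp only [Category.assoc]
    _ = u.map (f.map (u.map (π.app (g.obj X)))) ≫
          u.map (adjf.counit.app (vbar.obj (fbar.obj (g.obj X)))) ≫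
          u.map (vbar.map (θ.app X)) ≫
          e.hom.app (gbar.obj (f.obj X)) ≫ v.map (σ.app (f.obj X)) := by
        slice_lhs 3 4 => rw [eθ X]
        simp only [Category.assoc]
    _ = u.map (f.map (u.map (π.app (g.obj X)))) ≫
          u.map (f.map (u.map (vbar.map (θ.app X)))) ≫
          u.map (adjf.counit.app (vbar.obj (gbar.obj (f.obj X)))) ≫
          e.hom.app (gbar.obj (f.obj X)) ≫ v.map (σ.app (f.obj X)) := by
        slice_lhs 2 3 => rw [← Functor.map_comp, l3, Functor.map_comp]
        simp only [Category.assoc]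
    _ = u.map (f.map (u.map (π.app (g.obj X)))) ≫
          u.map (f.map (u.map (vbar.map (θ.app X)))) ≫
          u.map (f.map (e.hom.app (gbar.obj (f.obj X)))) ≫
          u.map (f.map (v.map (σ.app (f.obj X)))) ≫
          u.map (π.app (g.obj (u.obj (f.obj X)))) ≫
          u.map (vbar.map (θ.app (u.obj (f.obj X)))) ≫
          u.map (vbar.map (gbar.map (adjf.counit.app (f.obj X)))) ≫
          e.hom.app (gbar.obj (f.obj X)) ≫ v.map (σ.app (f.obj X)) := by
        rw [ddagger (f.obj X)]
        simp only [Functor.map_comp, Category.assoc]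
    _ = u.map (f.map (u.map (π.app (g.obj X)))) ≫
          u.map (f.map (u.map (vbar.map (θ.app X)))) ≫
          u.map (f.map (e.hom.app (gbar.obj (f.obj X)))) ≫
          u.map (f.map (v.map (σ.app (f.obj X)))) ≫
          u.map (π.app (g.obj (u.obj (f.obj X)))) ≫
          u.map (vbar.map (θ.app (u.obj (f.obj X)))) ≫
          e.hom.app (gbar.obj (f.obj (u.obj (f.obj X)))) ≫
          v.map (ubar.map (gbar.map (adjf.counit.app (f.obj X)))) ≫
          v.map (σ.app (f.obj X)) := by
        slice_lhs 7 8 => rw [← eε]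
        simp only [Category.assoc]
    _ = u.map (f.map (u.map (π.app (g.obj X)))) ≫
          u.map (f.map (u.map (vbar.map (θ.app X)))) ≫
          u.map (f.map (e.hom.app (gbar.obj (f.obj X)))) ≫
          u.map (f.map (v.map (σ.app (f.obj X)))) ≫
          u.map (π.app (g.obj (u.obj (f.obj X)))) ≫
          e.hom.app (fbar.obj (g.obj (u.obj (f.obj X)))) ≫
          v.map (ubar.map (θ.app (u.obj (f.obj X)))) ≫
          v.map (ubar.map (gbar.map (adjf.counit.app (f.obj X)))) ≫
          v.map (σ.app (f.obj X)) := by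
        slice_lhs 6 7 => rw [← eθ (u.obj (f.obj X))]
        simp only [Category.assoc]
    _ = u.map (f.map (u.map (π.app (g.obj X)) ≫ e.hom.app (fbar.obj (g.obj X)) ≫
          v.map (ubar.map (θ.app X)) ≫ v.map (σ.app (f.obj X)))) ≫
        (u.map (π.app (g.obj (u.obj (f.obj X)))) ≫
          e.hom.app (fbar.obj (g.obj (u.obj (f.obj X)))) ≫
          v.map (ubar.map (θ.app (u.obj (f.obj X)))) ≫
          v.map (σ.app (f.obj (u.obj (f.obj X))))) ≫
        v.map (g.map (u.map (adjf.counit.app (f.obj X)))) := by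
        simp only [Functor.map_comp, Category.assoc]
        slice_rhs 8 9 => rw [← Functor.map_comp, sn, Functor.map_comp]
        slice_rhs 2 3 => rw [← Functor.map_comp, ← Functor.map_comp, eθ X,
          Functor.map_comp, Functor.map_comp]
        simp only [Category.assoc]

/-- Given a commutative square u v̄ = v ū with the four adjunctions and a section π̌ of the
mate π : fv ⟶ v̄ f̄, the 2-cell λ = (v σ f) ∘ (v ū θ) ∘ (identification) ∘ (u π g) satisfies
the multiplication compatibility axiom of a weak mixed distributive law for the monad
t = u f and the comonad c = v g. -/
theorem induced_lambda_mul_compat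
    {P : Type u₁} {L : Type u₂} {M : Type u₃} {K : Type u₄}
    [Category.{v₁} P] [Category.{v₂} L] [Category.{v₃} M] [Category.{v₄} K]
    (vbar : P ⥤ L) (ubar : P ⥤ M) (u : L ⥤ K) (v : M ⥤ K)
    (e : vbar ⋙ u ≅ ubar ⋙ v)
    (f : K ⥤ L) (adjf : f ⊣ u)
    (fbar : M ⥤ P) (adjfbar : fbar ⊣ ubar)
    (g : K ⥤ M) (adjv : v ⊣ g)
    (gbar : L ⥤ P) (adjvbar : vbar ⊣ gbar)
    (πc : (fbar ⋙ vbar) ⟶ (v ⋙ f))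
    (hπ : πc ≫ (mateEquiv adjfbar adjf).symm e.inv = 𝟙 (fbar ⋙ vbar))
    (hσ : (mateEquiv adjvbar adjv) e.inv ≫
      conjugateEquiv (adjv.comp adjf) (adjfbar.comp adjvbar) πc = 𝟙 (gbar ⋙ ubar)) :
    -- the mates π, σ and θ
    let π : (v ⋙ f) ⟶ (fbar ⋙ vbar) := (mateEquiv adjfbar adjf).symm e.inv
    let σ : (gbar ⋙ ubar) ⟶ (u ⋙ g) := (mateEquiv adjvbar adjv) e.inv
    let θ : (g ⋙ fbar) ⟶ (f ⋙ gbar) := (mateEquiv adjv adjvbar) πc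
    -- the induced 2-cell λ : u f v g ⟶ v g u f, componentwise
    let lam : ∀ X : K, u.obj (f.obj (v.obj (g.obj X))) ⟶ v.obj (g.obj (u.obj (f.obj X))) :=
      fun X => u.map (π.app (g.obj X)) ≫ e.hom.app (fbar.obj (g.obj X)) ≫
        v.map (ubar.map (θ.app X)) ≫ v.map (σ.app (f.obj X))
    -- multiplication compatibility: λ ∘ (μ c) = (c μ) ∘ (λ t) ∘ (t λ), with μ = u ε f
    ∀ X : K,
      u.map (adjf.counit.app (f.obj (v.obj (g.obj X)))) ≫ lam X =
      u.map (f.map (lam X)) ≫ lam (u.obj (f.obj X)) ≫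
        v.map (g.map (u.map (adjf.counit.app (f.obj X)))) := by
  intro π σ θ lam X
  have hπdef : ∀ m : M, π.app m = f.map (v.map (adjfbar.unit.app m)) ≫
      f.map (e.inv.app (fbar.obj m)) ≫ adjf.counit.app (vbar.obj (fbar.obj m)) := by
    intro m; simp [π, mateEquiv]
  have key : ∀ A : L, σ.app A ≫ adjfbar.unit.app (g.obj (u.obj A)) ≫
      ubar.map (θ.app (u.obj A)) ≫ ubar.map (gbar.map (adjf.counit.app A)) =
      𝟙 (ubar.obj (gbar.obj A)) := by
    intro A
    have h := congr_app hσ A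
    erw [NatTrans.comp_app] at h
    have hexp : (conjugateEquiv (adjv.comp adjf) (adjfbar.comp adjvbar) πc).app A =
        adjfbar.unit.app (g.obj (u.obj A)) ≫ ubar.map (θ.app (u.obj A)) ≫
        ubar.map (gbar.map (adjf.counit.app A)) := by
      simp [θ, conjugateEquiv, mateEquiv, Adjunction.comp]
    rw [hexp] at h
    have hσdef : σ.app A = adjv.unit.app (ubar.obj (gbar.obj A)) ≫
        g.map (e.inv.app (gbar.obj A)) ≫ g.map (u.map (adjvbar.counit.app A)) := by
      simp [σ, mateEquiv]
    rw [hσdef]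
    rw [← hσdef]; exact h
  exact aux_chase vbar ubar u v e f adjf fbar adjfbar g adjv gbar adjvbar π σ θ hπdef key X
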